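/- Let L : M_n(ℂ) → [0,∞) be convex, unitarily invariant (L(UAV) = L(A) for all unitaries U, V), with L(0) = 0. If A and B are positive semidefinite matrices with A ≤ B in the Löwner order, then L(A) ≤ L(B). -/

import Mathlib

open Matrix
open scoped ComplexOrder

noncomputable section

/-- The positive semidefinite square root of a positive semidefinite matrix
(re-declared with the definition it had in Mathlib of December 2024, where it has since been removed) -/
noncomputable def Matrix.PosSemidef.sqrt {n 𝕜 : Type*} [Fintype n] [DecidableEq n] [RCLike 𝕜]
    {A : Matrix n n 𝕜} (hA : A.PosSemidef) : Matrix n n 𝕜 :=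
  hA.1.eigenvectorUnitary.1 * diagonal ((↑) ∘ (√·) ∘ hA.1.eigenvalues) *
  (star hA.1.eigenvectorUnitary : Matrix n n 𝕜)

theorem Matrix.PosSemidef.posSemidef_sqrt {n 𝕜 : Type*} [Fintype n] [DecidableEq n] [RCLike 𝕜]
    {A : Matrix n n 𝕜} (hA : A.PosSemidef) : PosSemidef hA.sqrt := by
  unfold Matrix.PosSemidef.sqrt
  rw [star_eq_conjTranspose]
  refine PosSemidef.mul_mul_conjTranspose_same ?_ _
  refine posSemidef_diagonal_iff.mpr fun i => ?_
  simp only [Function.comp_apply]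
  exact_mod_cast Real.sqrt_nonneg _

/-- n×n complex matrices -/
abbrev Mat (n : ℕ) := Matrix (Fin n) (Fin n) ℂ

/-- modulus |A| = sqrt (Aᴴ A) -/
noncomputable def matAbs {n : ℕ} (A : Mat n) : Mat n :=
  (Matrix.posSemidef_conjTranspose_mul_self A).sqrt

/-- spectral (operator) norm -/
noncomputable def specNorm {n : ℕ} (A : Mat n) : ℝ :=
  ‖Matrix.toEuclideanCLM (𝕜 := ℂ) (n := Fin n) A‖

/-- Löwner order: `A ≤ B` iff `B - A` is positive semidefinite -/
def loewnerLE {n : ℕ} (A B : Mat n) : Prop := (B - A).PosSemidef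

/-- singular values of `A`, arranged in non-increasing order -/
noncomputable def sval {n : ℕ} (A : Mat n) : Fin n → ℝ :=
  fun i =>
    let e := ((Matrix.posSemidef_conjTranspose_mul_self A).posSemidef_sqrt).1.eigenvalues
    (e ∘ Tuple.sort e) i.rev

/-- singular values indexed by naturals (0 beyond the size) -/
noncomputable def svalNat {n : ℕ} (A : Mat n) (k : ℕ) : ℝ :=
  if h : k < n then sval A ⟨k, h⟩ else 0

/-- eigenvalues of a Hermitian matrix, arranged in non-increasing order -/
noncomputable def eigsDesc {n : ℕ} {A : Mat n} (hA : A.IsHermitian) : Fin n → ℝ :=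
  fun i => (hA.eigenvalues ∘ Tuple.sort hA.eigenvalues) i.rev

variable {n : ℕ}

lemma toEuclideanLin_eigenvectorBasis (M : Mat n) (hM : M.IsHermitian) (j : Fin n) :
    Matrix.toEuclideanLin M (hM.eigenvectorBasis j) = (hM.eigenvalues j : ℂ) • hM.eigenvectorBasis j := by
  rw [Matrix.toEuclideanLin_apply]
  rw [show (hM.eigenvectorBasis j).ofLp = ⇑(hM.eigenvectorBasis j) from rfl]
  rw [hM.mulVec_eigenvectorBasis j]
  rw [show (WithLp.toLp 2 (hM.eigenvalues j • ⇑(hM.eigenvectorBasis j)))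
      = hM.eigenvalues j • hM.eigenvectorBasis j from rfl]
  exact RCLike.real_smul_eq_coe_smul (K := ℂ) _ _

lemma quad (M : Mat n) (hM : M.IsHermitian) (x : EuclideanSpace ℂ (Fin n)) :
    inner ℂ x (Matrix.toEuclideanLin M x) =
      ∑ i, ((hM.eigenvalues i : ℂ) * (‖hM.eigenvectorBasis.repr x i‖ : ℂ) ^ 2) := by
  set u := hM.eigenvectorBasis with hu
  have hx : x = ∑ j, u.repr x j • u j := (u.sum_repr x).symm
  have hTx : Matrix.toEuclideanLin M x = ∑ j, u.repr x j • ((hM.eigenvalues j : ℂ) • u j) := by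
    conv_lhs => rw [hx]
    rw [map_sum]
    exact Finset.sum_congr rfl fun j _ => by
      rw [LinearMap.map_smul, toEuclideanLin_eigenvectorBasis M hM j]
  rw [hTx, inner_sum]
  refine Finset.sum_congr rfl fun j _ => ?_
  rw [inner_smul_right, inner_smul_right]
  have hj : (inner ℂ x (u j) : ℂ) = starRingEnd ℂ (u.repr x j) := by
    rw [← inner_conj_symm, u.repr_apply_apply]
  rw [hj]
  have h2 : u.repr x j * starRingEnd ℂ (u.repr x j) = (‖u.repr x j‖ : ℂ)^2 := RCLike.mul_conj _
  rw [← h2]; ring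

lemma inner_toEuclideanLin (M : Mat n) (x : EuclideanSpace ℂ (Fin n)) :
    (inner ℂ x (Matrix.toEuclideanLin M x) : ℂ) = star (x : Fin n → ℂ) ⬝ᵥ (M *ᵥ (x : Fin n → ℂ)) := by
  have h : ((Matrix.toEuclideanLin M x) : Fin n → ℂ) = M *ᵥ (x : Fin n → ℂ) := rfl
  simp only [PiLp.inner_apply, dotProduct, RCLike.inner_apply, h, Pi.star_apply,
    Complex.star_def, mul_comm]

lemma repr_zero (u : OrthonormalBasis (Fin n) ℂ (EuclideanSpace ℂ (Fin n))) (s : Finset (Fin n))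
    (x : EuclideanSpace ℂ (Fin n)) (hx : x ∈ Submodule.span ℂ (⇑u '' ↑s)) {j : Fin n}
    (hj : j ∉ s) : u.repr x j = 0 := by
  rw [u.repr_apply_apply]
  induction hx using Submodule.span_induction with
  | mem y hy =>
    obtain ⟨i, hi, rfl⟩ := hy
    exact u.orthonormal.2 (fun h : j = i => hj (h ▸ hi))
  | zero => simp
  | add y z _ _ hy hz => rw [inner_add_right, hy, hz, add_zero]
  | smul c y _ hy => rw [inner_smul_right, hy, mul_zero]

lemma norm_sq_repr (u : OrthonormalBasis (Fin n) ℂ (EuclideanSpace ℂ (Fin n)))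
    (x : EuclideanSpace ℂ (Fin n)) : ‖x‖^2 = ∑ i, ‖u.repr x i‖^2 := by
  rw [← LinearIsometryEquiv.norm_map u.repr x, EuclideanSpace.norm_eq, Real.sq_sqrt]
  positivity

lemma span_rank (u : OrthonormalBasis (Fin n) ℂ (EuclideanSpace ℂ (Fin n)))
    (s : Finset (Fin n)) :
    Module.finrank ℂ (Submodule.span ℂ (⇑u '' ↑s)) = s.card := by
  have h1 : ⇑u '' ↑s = Set.range (fun i : ↥s => u i) := Set.image_eq_range _ _
  rw [h1]
  exact (finrank_span_eq_card
    (u.orthonormal.linearIndependent.comp _ Subtype.val_injective)).trans (Fintype.card_coe s)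

lemma weyl_mono (A B : Mat n) (hA : A.IsHermitian) (hB : B.IsHermitian)
    (hAB : (B - A).PosSemidef) (k : Fin n) :
    (hA.eigenvalues ∘ Tuple.sort hA.eigenvalues) k ≤ (hB.eigenvalues ∘ Tuple.sort hB.eigenvalues) k := by
  classical
  set σA := Tuple.sort hA.eigenvalues with hσA
  set σB := Tuple.sort hB.eigenvalues with hσB
  set uA := hA.eigenvectorBasis with huA
  set uB := hB.eigenvectorBasis with huB
  set sA : Finset (Fin n) := (Finset.Ici k).image σA with hsA
  set sB : Finset (Fin n) := (Finset.Iic k).image σB with hsB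
  set VA := Submodule.span ℂ (⇑uA '' ↑sA) with hVA
  set VB := Submodule.span ℂ (⇑uB '' ↑sB) with hVB
  -- dimension count
  have hcardA : sA.card = n - k := by
    rw [hsA, Finset.card_image_of_injective _ σA.injective, Fin.card_Ici]
  have hcardB : sB.card = k + 1 := by
    rw [hsB, Finset.card_image_of_injective _ σB.injective, Fin.card_Iic]
  have hrA : Module.finrank ℂ VA = n - k := by rw [hVA, span_rank, hcardA]
  have hrB : Module.finrank ℂ VB = k + 1 := by rw [hVB, span_rank, hcardB]
  have hsum := Submodule.finrank_sup_add_finrank_inf_eq VA VB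
  have hle : Module.finrank ℂ ↥(VA ⊔ VB) ≤ n := by
    have := Submodule.finrank_le (VA ⊔ VB)
    rwa [finrank_euclideanSpace_fin] at this
  have hpos : 0 < Module.finrank ℂ ↥(VA ⊓ VB) := by
    rw [hrA, hrB] at hsum
    have hk : (k : ℕ) < n := k.isLt
    omega
  obtain ⟨⟨x, hxmem⟩, hx0⟩ := Module.finrank_pos_iff_exists_ne_zero.mp hpos
  have hxne : x ≠ 0 := fun h => hx0 (Subtype.ext h)
  have hxA : x ∈ VA := hxmem.1
  have hxB : x ∈ VB := hxmem.2
  -- quadratic forms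
  set cA : Fin n → ℂ := fun i => uA.repr x i with hcA
  set cB : Fin n → ℂ := fun i => uB.repr x i with hcB
  set qA : ℝ := ∑ i, hA.eigenvalues i * ‖uA.repr x i‖^2 with hqA
  set qB : ℝ := ∑ i, hB.eigenvalues i * ‖uB.repr x i‖^2 with hqB
  have hquadA : star (x : Fin n → ℂ) ⬝ᵥ (A *ᵥ (x : Fin n → ℂ)) = (qA : ℂ) := by
    rw [← inner_toEuclideanLin, quad A hA x, hqA]
    push_cast
    rfl
  have hquadB : star (x : Fin n → ℂ) ⬝ᵥ (B *ᵥ (x : Fin n → ℂ)) = (qB : ℂ) := by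
    rw [← inner_toEuclideanLin, quad B hB x, hqB]
    push_cast
    rfl
  have hABq : qA ≤ qB := by
    have h0 := hAB.dotProduct_mulVec_nonneg (x : Fin n → ℂ)
    rw [Matrix.sub_mulVec, dotProduct_sub, hquadA, hquadB, ← Complex.ofReal_sub] at h0
    have := Complex.real_le_real.mp (by simpa using h0)
    linarith
  -- lower bound for qA
  have hmonoA := Tuple.monotone_sort hA.eigenvalues
  have hmonoB := Tuple.monotone_sort hB.eigenvalues
  have hlowA : (hA.eigenvalues ∘ σA) k * ‖x‖^2 ≤ qA := by
    rw [norm_sq_repr uA x, Finset.mul_sum, hqA]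
    refine Finset.sum_le_sum fun i _ => ?_
    by_cases hi : i ∈ sA
    · obtain ⟨j, hj, rfl⟩ := Finset.mem_image.mp hi
      have hj' : k ≤ j := Finset.mem_Ici.mp hj
      have : (hA.eigenvalues ∘ σA) k ≤ hA.eigenvalues (σA j) := hmonoA hj'
      exact mul_le_mul_of_nonneg_right this (sq_nonneg _)
    · rw [repr_zero uA sA x hxA hi]
      simp
  have hupB : qB ≤ (hB.eigenvalues ∘ σB) k * ‖x‖^2 := by
    rw [norm_sq_repr uB x, Finset.mul_sum, hqB]
    refine Finset.sum_le_sum fun i _ => ?_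
    by_cases hi : i ∈ sB
    · obtain ⟨j, hj, rfl⟩ := Finset.mem_image.mp hi
      have hj' : j ≤ k := Finset.mem_Iic.mp hj
      have : hB.eigenvalues (σB j) ≤ (hB.eigenvalues ∘ σB) k := hmonoB hj'
      exact mul_le_mul_of_nonneg_right this (sq_nonneg _)
    · rw [repr_zero uB sB x hxB hi]
      simp
  have hx2 : 0 < ‖x‖^2 := pow_pos (norm_pos_iff.mpr hxne) 2
  have := le_trans hlowA (le_trans hABq hupB)
  exact le_of_mul_le_mul_right (by simpa [mul_comm] using this) hx2

lemma perm_mem_unitary (σ : Equiv.Perm (Fin n)) :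
    (σ.toPEquiv.toMatrix : Mat n) ∈ Matrix.unitaryGroup (Fin n) ℂ := by
  rw [Matrix.mem_unitaryGroup_iff]
  have hstar : star (σ.toPEquiv.toMatrix : Mat n) = ((Equiv.symm σ).toPEquiv.toMatrix : Mat n) := by
    ext i j
    simp only [Matrix.star_apply, PEquiv.toMatrix_apply, Equiv.toPEquiv_apply, Option.mem_def,
      Option.some.injEq]
    by_cases h : σ j = i
    · subst h; simp
    · have h2 : ¬ (Equiv.symm σ) i = j := fun hc => h (by simp [← hc])
      simp [h, h2]
  rw [hstar, ← PEquiv.toMatrix_trans, ← Equiv.toPEquiv_trans]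
  simp [PEquiv.toMatrix_refl]

section Lside
variable (L : Mat n → ℝ)
    (hUI : ∀ (U V : Matrix.unitaryGroup (Fin n) ℂ) (A : Mat n),
      L ((U : Mat n) * A * (V : Mat n)) = L A)

include hUI in
lemma L_perm (v : Fin n → ℂ) (σ : Equiv.Perm (Fin n)) :
    L (diagonal (v ∘ σ)) = L (diagonal v) := by
  have key : (σ.toPEquiv.toMatrix : Mat n) * diagonal v * ((Equiv.symm σ).toPEquiv.toMatrix : Mat n)
      = diagonal (v ∘ σ) := by
    rw [PEquiv.toMatrix_toPEquiv_mul, PEquiv.mul_toMatrix_toPEquiv, Matrix.submatrix_submatrix,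
      Equiv.symm_symm]
    simpa using Matrix.submatrix_diagonal_equiv v σ
  rw [← key]
  exact hUI ⟨_, perm_mem_unitary σ⟩ ⟨_, perm_mem_unitary (Equiv.symm σ)⟩ (diagonal v)

include hUI in
lemma L_spectral (M : Mat n) (hM : M.IsHermitian) :
    L M = L (diagonal (fun i => (hM.eigenvalues i : ℂ))) := by
  conv_lhs => rw [hM.spectral_theorem]
  have hstar : star ((hM.eigenvectorUnitary : Mat n)) ∈ Matrix.unitaryGroup (Fin n) ℂ :=
    Unitary.star_mem hM.eigenvectorUnitary.2
  exact hUI hM.eigenvectorUnitary ⟨_, hstar⟩ _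



include hUI in
lemma L_step (hconv : ConvexOn ℝ Set.univ L)
    (g : Fin n → ℝ) (a : Fin n) (c : ℝ) (hc : 0 ≤ c) (hcg : c ≤ g a) :
    L (diagonal fun i => ((Function.update g a c i : ℝ) : ℂ)) ≤ L (diagonal fun i => (g i : ℂ)) := by
  set X : Mat n := diagonal fun i => (g i : ℂ) with hX
  set W : Mat n := diagonal (fun i => if i = a then (-1:ℂ) else 1) with hWdef
  have hW : W ∈ Matrix.unitaryGroup (Fin n) ℂ := by
    rw [Matrix.mem_unitaryGroup_iff]
    ext i j
    rw [hWdef, show star (diagonal (fun i => if i = a then (-1:ℂ) else 1))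
        = (diagonal (fun i => if i = a then (-1:ℂ) else 1))ᴴ from rfl, diagonal_conjTranspose,
      diagonal_mul_diagonal]
    by_cases h : i = a <;> by_cases h2 : i = j <;>
      simp [Matrix.diagonal_apply, Matrix.one_apply, h, h2, Pi.star_apply] <;>
      simp [← h2, h]
  have hWX : L (W * X) = L X := by
    have := hUI ⟨W, hW⟩ 1 X
    simpa using this
  set Y : Mat n := (1/2 : ℝ) • (X + W * X) with hYdef
  have hY : Y = diagonal fun i => ((Function.update g a 0 i : ℝ) : ℂ) := by
    rw [hYdef, hX, hWdef]
    ext i j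
    by_cases h2 : i = j
    · subst h2
      by_cases h : i = a <;>
        simp [Matrix.diagonal_apply, Function.update_apply, h, Complex.real_smul,
          Matrix.diagonal_mul_diagonal] <;> ring
    · simp [Matrix.diagonal_apply_ne _ h2, Matrix.diagonal_mul_diagonal, h2]
  have hLY : L Y ≤ L X := by
    have hcv := hconv.2 (Set.mem_univ X) (Set.mem_univ (W * X))
      (by norm_num : (0:ℝ) ≤ 1/2) (by norm_num : (0:ℝ) ≤ 1/2) (by norm_num)
    rw [hWX] at hcv
    calc L Y = L ((1/2:ℝ) • X + (1/2:ℝ) • (W * X)) := by rw [hYdef, smul_add]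
    _ ≤ 1/2 * L X + 1/2 * L X := by simpa using hcv
    _ = L X := by ring
  by_cases hga : g a = 0
  · have hc0 : c = 0 := le_antisymm (hga ▸ hcg) hc
    have : (Function.update g a c) = g := by
      funext i; by_cases h : i = a <;> simp [h, Function.update_apply, hc0, hga]
    rw [this]
  · have hgapos : 0 < g a := lt_of_le_of_ne (hc.trans hcg) (Ne.symm hga)
    set t : ℝ := c / g a with ht
    have ht0 : 0 ≤ t := div_nonneg hc hgapos.le
    have ht1 : t ≤ 1 := (div_le_one hgapos).2 hcg
    have hX' : (diagonal fun i => ((Function.update g a c i : ℝ) : ℂ))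
        = t • X + (1 - t) • Y := by
      rw [hY, hX]
      ext i j
      by_cases h2 : i = j
      · subst h2
        by_cases h : i = a
        · subst h
          simp [Matrix.diagonal_apply, Function.update_apply, Complex.real_smul, ht]
          push_cast
          field_simp
        · simp [Matrix.diagonal_apply, Function.update_apply, h, Complex.real_smul]
          ring
      · simp [Matrix.diagonal_apply_ne _ h2, h2]
    have hcv := hconv.2 (Set.mem_univ X) (Set.mem_univ Y) (ht0) (by linarith : (0:ℝ) ≤ 1 - t)
      (by ring : t + (1 - t) = 1)
    calc L (diagonal fun i => ((Function.update g a c i : ℝ) : ℂ)) = L (t • X + (1-t) • Y) := by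
          rw [hX']
    _ ≤ t * L X + (1 - t) * L Y := by simpa using hcv
    _ ≤ t * L X + (1 - t) * L X := by nlinarith
    _ = L X := by ring

include hUI in
lemma L_mono_diag (hconv : ConvexOn ℝ Set.univ L)
    (d e : Fin n → ℝ) (hd : ∀ i, 0 ≤ d i) (hde : ∀ i, d i ≤ e i) :
    L (diagonal fun i => ((d i : ℝ) : ℂ)) ≤ L (diagonal fun i => ((e i : ℝ) : ℂ)) := by
  have key : ∀ s : Finset (Fin n),
      L (diagonal fun i => ((if i ∈ s then d i else e i : ℝ) : ℂ)) ≤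
        L (diagonal fun i => ((e i : ℝ) : ℂ)) := by
    intro s
    induction s using Finset.induction_on with
    | empty => simp
    | @insert a s ha ih =>
      have hupd : (fun i => (((if i ∈ insert a s then d i else e i : ℝ)) : ℂ))
          = fun i => ((Function.update (fun i => if i ∈ s then d i else e i) a (d a) i : ℝ) : ℂ) := by
        funext i
        congr 1
        by_cases h : i = a
        · subst h; simp [Function.update_apply, ha]
        · simp [Function.update_apply, h, Finset.mem_insert]
      have hstep := L_step L hUI hconv (fun i => if i ∈ s then d i else e i) a (d a)
        (hd a) (by simpa [ha] using hde a)
      calc L (diagonal fun i => ((if i ∈ insert a s then d i else e i : ℝ) : ℂ))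
          = L (diagonal fun i =>
            ((Function.update (fun i => if i ∈ s then d i else e i) a (d a) i : ℝ) : ℂ)) := by
            rw [hupd]
      _ ≤ L (diagonal fun i => ((if i ∈ s then d i else e i : ℝ) : ℂ)) := hstep
      _ ≤ _ := ih
  have := key Finset.univ
  simpa using this

end Lside

theorem stmt5 {n : ℕ} (L : Mat n → ℝ)
    (hconv : ConvexOn ℝ Set.univ L) (hpos : ∀ A, 0 ≤ L A) (h0 : L 0 = 0)
    (hUI : ∀ (U V : Matrix.unitaryGroup (Fin n) ℂ) (A : Mat n),
      L ((U : Mat n) * A * (V : Mat n)) = L A)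
    (A B : Mat n) (hA : A.PosSemidef) (hB : B.PosSemidef) (hAB : loewnerLE A B) :
    L A ≤ L B := by
  classical
  set a : Fin n → ℝ := hA.1.eigenvalues ∘ Tuple.sort hA.1.eigenvalues with haDef
  set b : Fin n → ℝ := hB.1.eigenvalues ∘ Tuple.sort hB.1.eigenvalues with hbDef
  have ha0 : ∀ i, 0 ≤ a i := fun i => hA.eigenvalues_nonneg _
  have hab : ∀ i, a i ≤ b i := fun i => weyl_mono A B hA.1 hB.1 hAB i
  have hLA : L A = L (diagonal fun i => ((a i : ℝ) : ℂ)) := by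
    rw [L_spectral L hUI A hA.1]
    exact (L_perm L hUI (fun i => (hA.1.eigenvalues i : ℂ)) (Tuple.sort hA.1.eigenvalues)).symm
  have hLB : L B = L (diagonal fun i => ((b i : ℝ) : ℂ)) := by
    rw [L_spectral L hUI B hB.1]
    exact (L_perm L hUI (fun i => (hB.1.eigenvalues i : ℂ)) (Tuple.sort hB.1.eigenvalues)).symm
  rw [hLA, hLB]
  exact L_mono_diag L hUI hconv a b ha0 hab

end
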